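/- arXiv:2111.00274 — 5 statements merged into one kernel-verified Lean document; each statement's English description precedes it below -/
import Mathlib

section
/- Let E be a real Banach space and A : E →L[ℝ] E a bounded linear operator such that there exist constants C ≥ 1 and w ≥ 0 with ‖exp(tA)‖ ≤ C·e^{wt} for all t ≥ 0. Then for every real λ > w, the operator λ·id − A is invertible (i.e. λ lies in the resolvent set of A), its inverse R(λ,A) satisfies R(λ,A) f = ∫₀^∞ e^{−λt} (exp(tA)) f dt for every f ∈ E, and the operator norm satisfies ‖R(λ,A)‖ ≤ C/(λ − w). -/
open MeasureTheory NormedSpace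

set_option maxHeartbeats 1000000
set_option synthInstance.maxHeartbeats 400000

lemma aux_exp_integral (b : ℝ) (hb : 0 < b) :
    ∫ t in Set.Ioi (0 : ℝ), Real.exp (-(b * t)) = b⁻¹ := by
  have hderiv : ∀ t ∈ Set.Ici (0 : ℝ),
      HasDerivAt (fun t : ℝ => -b⁻¹ * Real.exp (-(b * t))) (Real.exp (-(b * t))) t := by
    intro t _
    have h1 : HasDerivAt (fun t : ℝ => -(b * t)) (-b) t := by simpa [neg_mul] using (hasDerivAt_id t).const_mul (-b)
    have h2 := (h1.exp).const_mul (-b⁻¹)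
    convert h2 using 1
    · rfl
    · rfl
    rw [show -b⁻¹ * (Real.exp (-(b * t)) * -b) = Real.exp (-(b * t)) * (b⁻¹ * b) by ring, inv_mul_cancel₀ hb.ne', mul_one]
  have hint : IntegrableOn (fun t : ℝ => Real.exp (-(b * t))) (Set.Ioi 0) := by
    simpa [neg_mul] using exp_neg_integrableOn_Ioi 0 hb
  have htend : Filter.Tendsto (fun t : ℝ => -b⁻¹ * Real.exp (-(b * t)))
      Filter.atTop (nhds 0) := by
    have h1 : Filter.Tendsto (fun t : ℝ => b * t) Filter.atTop Filter.atTop :=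
      Filter.Tendsto.const_mul_atTop hb Filter.tendsto_id
    have h2 : Filter.Tendsto (fun t : ℝ => Real.exp (-(b * t))) Filter.atTop (nhds 0) :=
      Real.tendsto_exp_neg_atTop_nhds_zero.comp h1
    simpa using h2.const_mul (-b⁻¹)
  have := integral_Ioi_of_hasDerivAt_of_tendsto' hderiv hint htend
  simp at this
  rw [this]

/-- For a bounded operator `A` on a real Banach space `E` whose semigroup `exp (t • A)`
satisfies the growth bound `‖exp (t • A)‖ ≤ C * e^(w t)`, every real `λ > w` lies in the
resolvent set of `A`: `λ • id - A` is invertible, the inverse (resolvent) is given by the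
Laplace transform of the semigroup, and its norm is at most `C / (λ - w)`. -/
theorem stmt_0 {E : Type*} [NormedAddCommGroup E] [NormedSpace ℝ E] [CompleteSpace E]
    (A : E →L[ℝ] E) (C w : ℝ) (hC : 1 ≤ C) (hw : 0 ≤ w)
    (hbound : ∀ t : ℝ, 0 ≤ t → ‖exp (t • A)‖ ≤ C * Real.exp (w * t))
    (l : ℝ) (hl : w < l) :
    ∃ R : E →L[ℝ] E,
      (l • (1 : E →L[ℝ] E) - A) * R = 1 ∧
      R * (l • (1 : E →L[ℝ] E) - A) = 1 ∧
      (∀ f : E, R f = ∫ t in Set.Ioi (0 : ℝ), Real.exp (-(l * t)) • (exp (t • A)) f) ∧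
      ‖R‖ ≤ C / (l - w) := by
  have hb : (0:ℝ) < l - w := by linarith
  set B : E →L[ℝ] E := l • (1 : E →L[ℝ] E) - A with hB
  set g : ℝ → (E →L[ℝ] E) := fun t => Real.exp (-(l * t)) • exp (t • A) with hg
  -- commutation
  have hcomm : ∀ t : ℝ, exp (t • A) * A = A * exp (t • A) := fun t =>
    (((Commute.refl A).smul_left t).exp_left)
  have hgB : ∀ t : ℝ, g t * B = B * g t := by
    intro t
    have h1 : Commute (exp (t • A)) A := ((Commute.refl A).smul_left t).exp_left
    have h2 : Commute (g t) B :=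
      (((Commute.one_right (g t)).smul_right l).sub_right (h1.smul_left _))
    exact h2
  -- continuity of g
  have hgcont : Continuous g := by
    apply Continuous.fun_smul
    · exact Real.continuous_exp.comp ((continuous_const.mul continuous_id).neg)
    · exact (continuous_iff_continuousAt.2 fun (x : E →L[ℝ] E) => (exp_analytic (𝕂 := ℝ) x).continuousAt).comp (continuous_id.smul continuous_const)
  -- norm bound on g
  have hgnorm : ∀ t : ℝ, 0 ≤ t → ‖g t‖ ≤ C * Real.exp (-((l - w) * t)) := by
    intro t ht
    have h1 : ‖g t‖ = Real.exp (-(l * t)) * ‖exp (t • A)‖ := by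
      simp only [hg]; rw [norm_smul (Real.exp (-(l * t))) (exp (t • A)), Real.norm_eq_abs, Real.abs_exp]
    rw [h1]
    calc Real.exp (-(l * t)) * ‖exp (t • A)‖
        ≤ Real.exp (-(l * t)) * (C * Real.exp (w * t)) := by
          exact mul_le_mul_of_nonneg_left (hbound t ht) (Real.exp_nonneg _)
      _ = C * Real.exp (-((l - w) * t)) := by
          rw [show -((l - w) * t) = w * t + -(l * t) by ring, Real.exp_add]; ring
  -- integrability
  have hint_bound : IntegrableOn (fun t : ℝ => C * Real.exp (-((l - w) * t))) (Set.Ioi 0) := by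
    have h0 := (exp_neg_integrableOn_Ioi 0 hb).const_mul C
    simp only [neg_mul] at h0
    exact h0
  have hg_int : IntegrableOn g (Set.Ioi 0) := by
    apply Integrable.mono' hint_bound (hgcont.aestronglyMeasurable.restrict)
    refine (ae_restrict_iff' measurableSet_Ioi).2 (Filter.Eventually.of_forall ?_)
    exact fun t ht => hgnorm t (le_of_lt ht)
  -- the candidate resolvent
  set R : E →L[ℝ] E := ∫ t in Set.Ioi (0:ℝ), g t with hR
  -- derivative of g
  have hderiv : ∀ t : ℝ, HasDerivAt g (-(B * g t)) t := by
    intro t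
    have h1 : HasDerivAt (fun t : ℝ => Real.exp (-(l * t)))
        (Real.exp (-(l * t)) * (-l)) t := by
      simpa using (((hasDerivAt_id t).const_mul l).neg).exp
    have h2 : HasDerivAt (fun t : ℝ => exp (t • A)) (exp (t • A) * A) t :=
      hasDerivAt_exp_smul_const A t
    have h3 := h1.smul h2
    convert h3 using 1
    · rfl
    · rfl
    · rfl
    · rfl
    rw [hB, hg]
    rw [sub_mul, smul_mul_assoc, one_mul]
    rw [mul_smul_comm, hcomm t]
    rw [smul_smul]
    module
  have htend : Filter.Tendsto g Filter.atTop (nhds 0) := by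
    apply squeeze_zero_norm' _ ?_
    · exact fun t => C * Real.exp (-((l - w) * t))
    · filter_upwards [Filter.eventually_ge_atTop (0:ℝ)] with t ht
      exact hgnorm t ht
    · have h1 : Filter.Tendsto (fun t : ℝ => (l - w) * t) Filter.atTop Filter.atTop :=
        Filter.Tendsto.const_mul_atTop hb Filter.tendsto_id
      simpa using (Real.tendsto_exp_neg_atTop_nhds_zero.comp h1).const_mul C
  -- the key integral identity
  have hg0 : g 0 = 1 := by simp [hg, exp_zero]
  have f'int : IntegrableOn (fun t : ℝ => -(B * g t)) (Set.Ioi 0) := by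
    exact ((ContinuousLinearMap.mul ℝ (E →L[ℝ] E) B).integrable_comp hg_int).neg
  have hkey : ∫ t in Set.Ioi (0:ℝ), -(B * g t) = 0 - g 0 :=
    integral_Ioi_of_hasDerivAt_of_tendsto' (fun t _ => hderiv t) f'int htend
  have hkey2 : ∫ t in Set.Ioi (0:ℝ), B * g t = 1 := by
    have := hkey
    rw [integral_neg, hg0, zero_sub, neg_eq_iff_eq_neg] at this
    rw [this, neg_neg]
  have hBR : B * R = 1 := by
    have h := (ContinuousLinearMap.mul ℝ (E →L[ℝ] E) B).integral_comp_comm hg_int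
    simp only [ContinuousLinearMap.mul_apply'] at h
    rw [hR, ← h, hkey2]
  have hRB : R * B = 1 := by
    have h := ((ContinuousLinearMap.mul ℝ (E →L[ℝ] E)).flip B).integral_comp_comm hg_int
    simp only [ContinuousLinearMap.flip_apply, ContinuousLinearMap.mul_apply'] at h
    rw [hR, ← h]
    rw [← hkey2]
    exact integral_congr_ae (Filter.Eventually.of_forall fun t => hgB t)
  refine ⟨R, hBR, hRB, ?_, ?_⟩
  · intro f
    have h := ContinuousLinearMap.integral_apply (μ := volume.restrict (Set.Ioi (0:ℝ))) hg_int f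
    rw [hR, h]
    simp [hg]
  · calc ‖R‖ ≤ ∫ t in Set.Ioi (0:ℝ), ‖g t‖ := norm_integral_le_integral_norm g
      _ ≤ ∫ t in Set.Ioi (0:ℝ), C * Real.exp (-((l - w) * t)) := by
          apply setIntegral_mono_on hg_int.norm hint_bound measurableSet_Ioi
          exact fun t ht => hgnorm t (le_of_lt ht)
      _ = C * (l - w)⁻¹ := by
          rw [integral_const_mul, aux_exp_integral _ hb]
      _ = C / (l - w) := by rw [div_eq_mul_inv]
end

section
/- Let E be a real Banach space and A : E →L[ℝ] E a bounded linear operator with ‖exp(tA)‖ ≤ C·e^{wt} for all t ≥ 0, where C ≥ 1 and w ≥ 0. Then for every t > 0, every real λ > w and every f ∈ E, one has the identity ∑_{n=1}^∞ (−1)^{n−1} (e^{nλt}/n!) R(nλ,A)(A f) = λ·∑_{n=1}^∞ (−1)^{n−1} (e^{nλt}/(n−1)!) R(nλ,A) f + (exp(−e^{λt}) − 1)·f, both series converging in E. -/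
open MeasureTheory NormedSpace

set_option maxHeartbeats 2000000 in
/-- The resolvent identity behind the Phragmén approximant: for `t > 0` and `λ > w`,
`∑_{n≥1} (-1)^(n-1) (e^(nλt)/n!) R(nλ)(A f)
  = λ ∑_{n≥1} (-1)^(n-1) (e^(nλt)/(n-1)!) R(nλ) f + (exp(-e^(λt)) - 1) f`,
both series converging in `E`. -/
theorem stmt_2 {E : Type*} [NormedAddCommGroup E] [NormedSpace ℝ E] [CompleteSpace E]
    (A : E →L[ℝ] E) (C w : ℝ) (hC : 1 ≤ C) (hw : 0 ≤ w)
    (hbound : ∀ t : ℝ, 0 ≤ t → ‖exp (t • A)‖ ≤ C * Real.exp (w * t))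
    (R : ℝ → E →L[ℝ] E)
    (hR : ∀ μ : ℝ, w < μ →
      (μ • (1 : E →L[ℝ] E) - A) * R μ = 1 ∧ R μ * (μ • (1 : E →L[ℝ] E) - A) = 1)
    (t : ℝ) (ht : 0 < t) (l : ℝ) (hl : w < l) (f : E) :
    Summable (fun n : ℕ => ((-1 : ℝ)) ^ n •
      (Real.exp (((n : ℝ) + 1) * l * t) / (Nat.factorial (n + 1) : ℝ)) •
        R (((n : ℝ) + 1) * l) (A f)) ∧
    Summable (fun n : ℕ => ((-1 : ℝ)) ^ n •
      (Real.exp (((n : ℝ) + 1) * l * t) / (Nat.factorial n : ℝ)) •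
        R (((n : ℝ) + 1) * l) f) ∧
    (∑' n : ℕ, ((-1 : ℝ)) ^ n •
        (Real.exp (((n : ℝ) + 1) * l * t) / (Nat.factorial (n + 1) : ℝ)) •
          R (((n : ℝ) + 1) * l) (A f)) =
      l • (∑' n : ℕ, ((-1 : ℝ)) ^ n •
        (Real.exp (((n : ℝ) + 1) * l * t) / (Nat.factorial n : ℝ)) •
          R (((n : ℝ) + 1) * l) f) +
      (Real.exp (-Real.exp (l * t)) - 1) • f := by
  have hl0 : 0 < l := lt_of_le_of_lt hw hl
  have hμ : ∀ n : ℕ, w < ((n : ℝ) + 1) * l := by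
    intro n
    calc w < l := hl
      _ ≤ ((n : ℝ) + 1) * l := le_mul_of_one_le_left hl0.le
        (by have := Nat.cast_nonneg (α := ℝ) n; linarith)
  have hexp : ∀ n : ℕ, Real.exp (((n : ℝ) + 1) * l * t) = Real.exp (l * t) * Real.exp (l * t) ^ n := by
    intro n
    rw [show ((n : ℝ) + 1) * l * t = ((n + 1 : ℕ) : ℝ) * (l * t) by push_cast; ring,
      Real.exp_nat_mul, pow_succ]
    ring
  -- resolvent norm bound
  have hRnorm : ∀ n : ℕ, ‖A‖ + 1 ≤ ((n : ℝ) + 1) * l → ‖R (((n : ℝ) + 1) * l)‖ ≤ 1 := by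
    intro n hn
    set μ := ((n : ℝ) + 1) * l with hμdef
    have h2 := (hR μ (hμ n)).2
    have h3 : R μ * (μ • (1 : E →L[ℝ] E)) - R μ * A = 1 := by rw [← mul_sub]; exact h2
    rw [mul_smul_comm, mul_one] at h3
    have key : μ • R μ = 1 + R μ * A := eq_add_of_sub_eq h3
    have hnorm1 : ‖(1 : E →L[ℝ] E)‖ ≤ 1 := by
      rw [ContinuousLinearMap.one_def]; exact ContinuousLinearMap.norm_id_le
    have h4 : μ * ‖R μ‖ ≤ 1 + ‖R μ‖ * ‖A‖ := by
      have h6 : ‖μ • R μ‖ ≤ ‖(1 : E →L[ℝ] E)‖ + ‖R μ * A‖ := by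
        rw [key]; exact norm_add_le _ _
      have h5 : ‖R μ * A‖ ≤ ‖R μ‖ * ‖A‖ := norm_mul_le _ _
      rw [norm_smul μ (R μ), Real.norm_eq_abs, abs_of_pos (lt_of_le_of_lt hw (hμ n))] at h6
      rw [← hμdef] at h6
      linarith
    nlinarith [norm_nonneg (R μ), norm_nonneg A]
  -- resolvent identity on A f
  have hRAf : ∀ n : ℕ, R (((n : ℝ) + 1) * l) (A f)
      = (((n : ℝ) + 1) * l) • R (((n : ℝ) + 1) * l) f - f := by
    intro n
    set μ := ((n : ℝ) + 1) * l with hμdef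
    have h2 := (hR μ (hμ n)).2
    have h3 : R μ ((μ • (1 : E →L[ℝ] E) - A) f) = f := by
      rw [← ContinuousLinearMap.comp_apply, ← ContinuousLinearMap.mul_def, h2,
        ContinuousLinearMap.one_apply]
    simp only [ContinuousLinearMap.sub_apply, ContinuousLinearMap.smul_apply,
      ContinuousLinearMap.one_apply, map_sub, ContinuousLinearMap.map_smul] at h3
    rw [sub_eq_iff_eq_add] at h3
    rw [h3]
    abel
  -- summability of the second series
  have hS2 : Summable (fun n : ℕ => ((-1 : ℝ)) ^ n •
      (Real.exp (((n : ℝ) + 1) * l * t) / (Nat.factorial n : ℝ)) •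
        R (((n : ℝ) + 1) * l) f) := by
    apply Summable.of_norm_bounded_eventually_nat
      (g := fun n => (Real.exp (l * t) * ‖f‖) * (Real.exp (l * t) ^ n / (Nat.factorial n : ℝ)))
    · exact (Real.summable_pow_div_factorial (Real.exp (l * t))).mul_left _
    · obtain ⟨N, hN⟩ := exists_nat_ge ((‖A‖ + 1) / l)
      filter_upwards [Filter.eventually_ge_atTop N] with n hn
      have hbig : ‖A‖ + 1 ≤ ((n : ℝ) + 1) * l := by
        have h1 : ((‖A‖ + 1) / l) * l ≤ ((n : ℝ) + 1) * l := by
          apply mul_le_mul_of_nonneg_right _ hl0.le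
          calc ((‖A‖ + 1) / l) ≤ (N : ℝ) := hN
            _ ≤ (n : ℝ) := by exact_mod_cast hn
            _ ≤ (n : ℝ) + 1 := by linarith
        rwa [div_mul_cancel₀ _ hl0.ne'] at h1
      have hRb := hRnorm n hbig
      rw [norm_smul, norm_smul]
      simp only [norm_pow, norm_neg, norm_one, one_pow, one_mul, Real.norm_eq_abs]
      rw [abs_of_nonneg (by positivity : (0:ℝ) ≤ Real.exp (((n : ℝ) + 1) * l * t) / (Nat.factorial n : ℝ))]
      rw [hexp n]
      have hRf : ‖R (((n : ℝ) + 1) * l) f‖ ≤ ‖f‖ := by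
        calc ‖R (((n : ℝ) + 1) * l) f‖ ≤ ‖R (((n : ℝ) + 1) * l)‖ * ‖f‖ :=
              ContinuousLinearMap.le_opNorm _ _
          _ ≤ 1 * ‖f‖ := mul_le_mul_of_nonneg_right hRb (norm_nonneg f)
          _ = ‖f‖ := one_mul _
      calc Real.exp (l * t) * Real.exp (l * t) ^ n / (Nat.factorial n : ℝ) * ‖R (((n : ℝ) + 1) * l) f‖
          ≤ Real.exp (l * t) * Real.exp (l * t) ^ n / (Nat.factorial n : ℝ) * ‖f‖ := by
            apply mul_le_mul_of_nonneg_left hRf (by positivity)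
        _ = (Real.exp (l * t) * ‖f‖) * (Real.exp (l * t) ^ n / (Nat.factorial n : ℝ)) := by ring
  -- scalar series
  have hgsum : Summable (fun n : ℕ => (-Real.exp (l * t)) ^ n / (Nat.factorial n : ℝ)) :=
    Real.summable_pow_div_factorial _
  have hcform : ∀ n : ℕ, (-1 : ℝ) ^ n * (Real.exp (((n : ℝ) + 1) * l * t) / (Nat.factorial (n + 1) : ℝ))
      = -((-Real.exp (l * t)) ^ (n + 1) / (Nat.factorial (n + 1) : ℝ)) := by
    intro n
    rw [hexp n, neg_pow, pow_succ]
    ring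
  have hcsum : Summable (fun n : ℕ => (-1 : ℝ) ^ n * (Real.exp (((n : ℝ) + 1) * l * t) / (Nat.factorial (n + 1) : ℝ))) := by
    have h1 : Summable (fun n : ℕ => (-Real.exp (l * t)) ^ (n + 1) / (Nat.factorial (n + 1) : ℝ)) :=
      (summable_nat_add_iff 1).2 hgsum
    exact h1.neg.congr fun n => (hcform n).symm
  have hctsum : (∑' n : ℕ, (-1 : ℝ) ^ n * (Real.exp (((n : ℝ) + 1) * l * t) / (Nat.factorial (n + 1) : ℝ)))
      = 1 - Real.exp (-Real.exp (l * t)) := by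
    have h0 : ∑' n : ℕ, (-Real.exp (l * t)) ^ n / (Nat.factorial n : ℝ) = Real.exp (-Real.exp (l * t)) := by
      rw [Real.exp_eq_exp_ℝ, exp_eq_tsum_div]
    have h1 := Summable.tsum_eq_zero_add hgsum
    simp only [pow_zero, Nat.factorial_zero, Nat.cast_one] at h1
    rw [h0] at h1
    have h2 : ∑' n : ℕ, (-Real.exp (l * t)) ^ (n + 1) / (Nat.factorial (n + 1) : ℝ)
        = Real.exp (-Real.exp (l * t)) - 1 := by
      rw [h1]; ring
    rw [tsum_congr hcform, tsum_neg, h2]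
    ring
  -- pointwise identity for the first series
  have hterm : ∀ n : ℕ, ((-1 : ℝ)) ^ n •
      (Real.exp (((n : ℝ) + 1) * l * t) / (Nat.factorial (n + 1) : ℝ)) •
        R (((n : ℝ) + 1) * l) (A f)
      = l • (((-1 : ℝ)) ^ n •
          (Real.exp (((n : ℝ) + 1) * l * t) / (Nat.factorial n : ℝ)) •
            R (((n : ℝ) + 1) * l) f)
        - ((-1 : ℝ) ^ n * (Real.exp (((n : ℝ) + 1) * l * t) / (Nat.factorial (n + 1) : ℝ))) • f := by
    intro n
    rw [hRAf n, smul_sub, smul_sub]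
    congr 1
    · rw [smul_smul, smul_smul, smul_smul, smul_smul]
      congr 1
      have hfact : ((Nat.factorial (n + 1) : ℝ)) = ((n : ℝ) + 1) * (Nat.factorial n : ℝ) := by
        rw [Nat.factorial_succ]; push_cast; ring
      have hfn : (Nat.factorial n : ℝ) ≠ 0 := by
        exact_mod_cast (Nat.factorial_ne_zero n)
      rw [hfact]
      field_simp
    · rw [smul_smul]
  -- assemble
  have hS1 : Summable (fun n : ℕ => ((-1 : ℝ)) ^ n •
      (Real.exp (((n : ℝ) + 1) * l * t) / (Nat.factorial (n + 1) : ℝ)) •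
        R (((n : ℝ) + 1) * l) (A f)) := by
    exact ((hS2.const_smul l).sub (hcsum.smul_const f)).congr fun n => (hterm n).symm
  refine ⟨hS1, hS2, ?_⟩
  rw [tsum_congr hterm, Summable.tsum_sub (hS2.const_smul l) (hcsum.smul_const f),
    Summable.tsum_const_smul _ hS2, Summable.tsum_smul_const hcsum, hctsum,
    show (Real.exp (-Real.exp (l * t)) - 1) = -(1 - Real.exp (-Real.exp (l * t))) by ring,
    neg_smul, ← sub_eq_add_neg]
end

section
/- Let E be a real Banach space and A : E →L[ℝ] E a bounded linear operator with ‖exp(tA)‖ ≤ C·e^{wt} for all t ≥ 0, where C ≥ 1 and w ≥ 0. Then for every t > 0 and every f ∈ E, the Phragmén approximants converge to the semigroup: λ·∑_{n=1}^∞ (−1)^{n−1} (e^{nλt}/(n−1)!) R(nλ,A) f → exp(tA) f in E as λ → ∞. -/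
open MeasureTheory NormedSpace Filter Set

set_option linter.unusedSectionVars false
set_option linter.unusedVariables false

section Helpers

variable {E : Type*} [NormedAddCommGroup E] [NormedSpace ℝ E] [CompleteSpace E]

lemma aux_exp_cont (A : E →L[ℝ] E) (f : E) :
    Continuous fun s : ℝ => exp (s • A) f := by
  have h1 : Continuous fun s : ℝ => exp (s • A) :=
    continuous_iff_continuousAt.2 fun s => (hasDerivAt_exp_smul_const' (𝕂 := ℝ) A s).continuousAt
  exact (ContinuousLinearMap.apply ℝ E f).continuous.comp h1

lemma aux_hasDerivAt (A : E →L[ℝ] E) (f : E) (s : ℝ) :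
    HasDerivAt (fun s : ℝ => exp (s • A) f) (A (exp (s • A) f)) s := by
  have h := (hasDerivAt_exp_smul_const' (𝕂 := ℝ) A s).clm_apply (hasDerivAt_const s f)
  simpa [ContinuousLinearMap.mul_apply] using h

set_option linter.unusedSectionVars false in
lemma aux_norm_T (A : E →L[ℝ] E) (C w : ℝ)
    (hbound : ∀ t : ℝ, 0 ≤ t → ‖exp (t • A)‖ ≤ C * Real.exp (w * t))
    (f : E) {s : ℝ} (hs : 0 ≤ s) :
    ‖exp (s • A) f‖ ≤ C * Real.exp (w * s) * ‖f‖ :=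
  ((exp (s • A)).le_opNorm f).trans
    (mul_le_mul_of_nonneg_right (hbound s hs) (norm_nonneg f))

lemma aux_integrable_T (A : E →L[ℝ] E) (C w : ℝ)
    (hbound : ∀ t : ℝ, 0 ≤ t → ‖exp (t • A)‖ ≤ C * Real.exp (w * t))
    (f : E) {μ : ℝ} (hμ : w < μ) :
    IntegrableOn (fun s : ℝ => Real.exp (-(μ * s)) • exp (s • A) f) (Ioi 0) := by
  have hmeas : AEStronglyMeasurable (fun s : ℝ => Real.exp (-(μ * s)) • exp (s • A) f)
      (volume.restrict (Ioi 0)) :=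
    ((Real.continuous_exp.comp (continuous_const.mul continuous_id).neg).smul
      (aux_exp_cont A f)).aestronglyMeasurable
  have hint : IntegrableOn (fun s : ℝ => (C * ‖f‖) * Real.exp (-(μ - w) * s)) (Ioi 0) :=
    ((exp_neg_integrableOn_Ioi 0 (by linarith)).const_mul _)
  refine (hint.mono' hmeas ?_)
  filter_upwards [ae_restrict_mem measurableSet_Ioi] with s hs
  have hs0 : (0:ℝ) ≤ s := le_of_lt hs
  have : ‖Real.exp (-(μ * s)) • exp (s • A) f‖
      = Real.exp (-(μ * s)) * ‖exp (s • A) f‖ := by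
    rw [norm_smul, Real.norm_eq_abs, abs_of_pos (Real.exp_pos _)]
  rw [this]
  calc Real.exp (-(μ * s)) * ‖exp (s • A) f‖
      ≤ Real.exp (-(μ * s)) * (C * Real.exp (w * s) * ‖f‖) :=
        mul_le_mul_of_nonneg_left (aux_norm_T A C w hbound f hs0) (Real.exp_pos _).le
    _ = (C * ‖f‖) * Real.exp (-(μ - w) * s) := by
        rw [show -(μ-w)*s = -(μ*s) + w*s by ring, Real.exp_add]; ring

set_option linter.unusedSectionVars false

lemma aux_integrable_AT (A : E →L[ℝ] E) (C w : ℝ)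
    (hbound : ∀ t : ℝ, 0 ≤ t → ‖exp (t • A)‖ ≤ C * Real.exp (w * t))
    (f : E) {μ : ℝ} (hμ : w < μ) :
    IntegrableOn (fun s : ℝ => Real.exp (-(μ * s)) • A (exp (s • A) f)) (Ioi 0) := by
  have h := aux_integrable_T A C w hbound (A f) hμ
  refine MeasureTheory.IntegrableOn.congr_fun h ?_ measurableSet_Ioi
  intro s _
  simp only
  congr 1
  have hc : Commute (A : E →L[ℝ] E) (exp (s • A)) := by
    refine Commute.exp_right ?_
    show A * (s • A) = (s • A) * A
    ext x
    simp [ContinuousLinearMap.mul_apply, _root_.map_smul]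
  calc exp (s • A) (A f) = (exp (s • A) * A) f := rfl
    _ = (A * exp (s • A)) f := by rw [hc.eq]
    _ = A (exp (s • A) f) := rfl

lemma aux_resolvent (A : E →L[ℝ] E) (C w : ℝ) (hC : 1 ≤ C) (hw : 0 ≤ w)
    (hbound : ∀ t : ℝ, 0 ≤ t → ‖exp (t • A)‖ ≤ C * Real.exp (w * t))
    (R : ℝ → E →L[ℝ] E)
    (hR : ∀ μ : ℝ, w < μ →
      (μ • (1 : E →L[ℝ] E) - A) * R μ = 1 ∧ R μ * (μ • (1 : E →L[ℝ] E) - A) = 1)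
    {μ : ℝ} (hμ : w < μ) (f : E) :
    R μ f = ∫ s in Ioi (0:ℝ), Real.exp (-(μ * s)) • exp (s • A) f := by
  set T : ℝ → E := fun s => exp (s • A) f with hT
  set g : ℝ → E := fun s => Real.exp (-(μ * s)) • T s with hg
  have hμ0 : 0 < μ := lt_of_le_of_lt hw hμ
  -- derivative of g
  have hder : ∀ s : ℝ, HasDerivAt g
      (Real.exp (-(μ * s)) • A (T s) - (μ * Real.exp (-(μ * s))) • T s) s := by
    intro s
    have h1 : HasDerivAt (fun s : ℝ => Real.exp (-(μ * s))) (-μ * Real.exp (-(μ * s))) s := by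
      have := (((hasDerivAt_id' s).const_mul μ).neg).exp
      simp only [Pi.neg_apply] at this
      convert this using 1
      ring
    have h2 := h1.smul (aux_hasDerivAt A f s)
    convert h2 using 1
    show _ = Real.exp (-(μ * s)) • A (T s) + (-μ * Real.exp (-(μ * s))) • T s
    module
    rfl
  -- integrability of the derivative
  have hint1 := aux_integrable_T A C w hbound f hμ
  have hint2 := aux_integrable_AT A C w hbound f hμ
  have hderint : IntegrableOn
      (fun s : ℝ => Real.exp (-(μ * s)) • A (T s) - (μ * Real.exp (-(μ * s))) • T s)
      (Ioi 0) := by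
    refine hint2.sub ?_
    have heq : (fun s : ℝ => (μ * Real.exp (-(μ * s))) • T s)
        = μ • fun s : ℝ => Real.exp (-(μ * s)) • T s := by
      funext s; simp [smul_smul]
    rw [heq]; exact hint1.smul μ
  -- limit of g at infinity
  have hlim : Tendsto g atTop (nhds 0) := by
    have hb : ∀ᶠ s : ℝ in atTop, ‖g s‖ ≤ (C * ‖f‖) * Real.exp (-(μ - w) * s) := by
      filter_upwards [eventually_ge_atTop (0:ℝ)] with s hs0
      rw [hg]
      simp only [norm_smul, Real.norm_eq_abs, abs_of_pos (Real.exp_pos _)]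
      calc Real.exp (-(μ * s)) * ‖T s‖
          ≤ Real.exp (-(μ * s)) * (C * Real.exp (w * s) * ‖f‖) :=
            mul_le_mul_of_nonneg_left (aux_norm_T A C w hbound f hs0) (Real.exp_pos _).le
        _ = (C * ‖f‖) * Real.exp (-(μ - w) * s) := by
            rw [show -(μ-w)*s = -(μ*s) + w*s by ring, Real.exp_add]; ring
    have hexp : Tendsto (fun s : ℝ => (C * ‖f‖) * Real.exp (-(μ - w) * s)) atTop (nhds 0) := by
      rw [show (0:ℝ) = (C * ‖f‖) * 0 by ring]
      refine Tendsto.const_mul _ ?_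
      refine Real.tendsto_exp_atBot.comp ?_
      exact Tendsto.const_mul_atTop_of_neg (by linarith) tendsto_id
    exact squeeze_zero_norm' hb hexp
  -- FTC on the half-line
  have hftc := integral_Ioi_of_hasDerivAt_of_tendsto' (f := g)
    (f' := fun s : ℝ => Real.exp (-(μ * s)) • A (T s) - (μ * Real.exp (-(μ * s))) • T s)
    (fun s _ => hder s) hderint hlim
  have hg0 : g 0 = f := by simp [hg, hT]
  rw [hg0] at hftc
  -- split the integral
  rw [integral_sub hint2 (by
    have heq : (fun s : ℝ => (μ * Real.exp (-(μ * s))) • T s)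
        = μ • fun s : ℝ => Real.exp (-(μ * s)) • T s := by
      funext s; simp [smul_smul]
    rw [heq]; exact hint1.smul μ)] at hftc
  have hAcomm : (∫ s in Ioi (0:ℝ), Real.exp (-(μ * s)) • A (T s))
      = A (∫ s in Ioi (0:ℝ), Real.exp (-(μ * s)) • T s) := by
    rw [← ContinuousLinearMap.integral_comp_comm A hint1]
    congr 1
    ext s
    simp [hT]
  have hμint : (∫ s in Ioi (0:ℝ), (μ * Real.exp (-(μ * s))) • T s)
      = μ • ∫ s in Ioi (0:ℝ), Real.exp (-(μ * s)) • T s := by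
    rw [← integral_smul]
    congr 1
    ext s
    simp [smul_smul]
  rw [hAcomm, hμint, zero_sub] at hftc
  set I : E := ∫ s in Ioi (0:ℝ), Real.exp (-(μ * s)) • T s with hI
  -- hftc : A I - μ • I = -f
  have hkey : (μ • (1 : E →L[ℝ] E) - A) I = f := by
    simp only [ContinuousLinearMap.sub_apply, ContinuousLinearMap.smul_apply,
      ContinuousLinearMap.one_apply]
    have : μ • I - A I = -(A I - μ • I) := by module
    rw [this, hftc, neg_neg]
  calc R μ f = R μ ((μ • (1 : E →L[ℝ] E) - A) I) := by rw [hkey]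
    _ = (R μ * (μ • (1 : E →L[ℝ] E) - A)) I := rfl
    _ = I := by rw [(hR μ hμ).2]; rfl

lemma aux_subst (A : E →L[ℝ] E) (C w : ℝ) (hC : 1 ≤ C) (hw : 0 ≤ w)
    (hbound : ∀ t : ℝ, 0 ≤ t → ‖exp (t • A)‖ ≤ C * Real.exp (w * t))
    (R : ℝ → E →L[ℝ] E)
    (hR : ∀ μ : ℝ, w < μ →
      (μ • (1 : E →L[ℝ] E) - A) * R μ = 1 ∧ R μ * (μ • (1 : E →L[ℝ] E) - A) = 1)
    {l : ℝ} (hl : w < l) (t : ℝ) (n : ℕ) (f : E) :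
    ∫ u in Ioo (0:ℝ) (Real.exp (l * t)),
        (u ^ n) • exp ((t - Real.log u / l) • A) f
      = (l * Real.exp (((n : ℝ) + 1) * l * t)) • R (((n : ℝ) + 1) * l) f := by
  have hl0 : 0 < l := lt_of_le_of_lt hw hl
  set φ : ℝ → ℝ := fun s => Real.exp (l * (t - s)) with hφ
  have hφ' : ∀ s : ℝ, HasDerivAt φ (-l * Real.exp (l * (t - s))) s := by
    intro s
    have h1 : HasDerivAt (fun s : ℝ => l * (t - s)) (-l) s := by
      simpa using ((hasDerivAt_id s).const_sub t).const_mul l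
    have := h1.exp
    convert this using 1
    ring
  have himg : φ '' Ioi 0 = Ioo 0 (Real.exp (l * t)) := by
    ext u
    constructor
    · rintro ⟨s, hs, rfl⟩
      refine ⟨Real.exp_pos _, Real.exp_lt_exp.mpr ?_⟩
      have : (0:ℝ) < s := hs
      nlinarith
    · rintro ⟨hu0, hu1⟩
      refine ⟨t - Real.log u / l, ?_, ?_⟩
      · have hlog : Real.log u < l * t := by
          have := Real.log_lt_log hu0 hu1
          rwa [Real.log_exp] at this
        have : Real.log u / l < t := by
          rw [div_lt_iff₀ hl0]; linarith [hlog]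
        simpa [mem_Ioi] using by linarith
      · show Real.exp (l * (t - (t - Real.log u / l))) = u
        rw [show l * (t - (t - Real.log u / l)) = Real.log u by field_simp; ring]
        exact Real.exp_log hu0
  have hinj : InjOn φ (Ioi 0) := by
    intro a _ b _ hab
    have := Real.exp_injective hab
    have : l * (t - a) = l * (t - b) := this
    have := mul_left_cancel₀ (ne_of_gt hl0) this
    linarith
  have hchg := integral_image_eq_integral_abs_deriv_smul measurableSet_Ioi
    (fun s _ => (hφ' s).hasDerivWithinAt) hinj
    (fun u => (u ^ n) • exp ((t - Real.log u / l) • A) f)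
  rw [himg] at hchg
  rw [hchg]
  set μ : ℝ := ((n : ℝ) + 1) * l with hμdef
  have hμ : w < μ := by
    have h1 : l ≤ μ := by
      rw [hμdef]; nlinarith [Nat.cast_nonneg (α := ℝ) n]
    linarith
  have hres := aux_resolvent A C w hC hw hbound R hR hμ f
  have heq : ∀ s ∈ Ioi (0:ℝ),
      |(-l * Real.exp (l * (t - s)))| • ((φ s ^ n) • exp ((t - Real.log (φ s) / l) • A) f)
      = (l * Real.exp (μ * t)) • (Real.exp (-(μ * s)) • exp (s • A) f) := by
    intro s _
    have hlogφ : Real.log (φ s) = l * (t - s) := Real.log_exp _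
    have habs : |(-l * Real.exp (l * (t - s)))| = l * Real.exp (l * (t - s)) := by
      rw [abs_mul, abs_neg, abs_of_pos hl0, abs_of_pos (Real.exp_pos _)]
    rw [habs, hlogφ]
    have harg : t - l * (t - s) / l = s := by field_simp; ring
    rw [harg]
    rw [smul_smul, smul_smul]
    congr 1
    have hφpow : φ s ^ n = Real.exp ((n : ℝ) * (l * (t - s))) := by
      rw [hφ]
      rw [← Real.exp_nat_mul]
    rw [hφpow, mul_assoc, ← Real.exp_add, mul_assoc, ← Real.exp_add]
    congr 2
    rw [hμdef]; ring
  rw [setIntegral_congr_fun measurableSet_Ioi heq]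
  rw [integral_smul]
  rw [← hres]

lemma aux_G_contOn (A : E →L[ℝ] E) (f : E) (t l : ℝ) :
    ContinuousOn (fun u : ℝ => exp ((t - Real.log u / l) • A) f) (Ioi 0) := by
  refine (aux_exp_cont A f).comp_continuousOn ?_
  refine ContinuousOn.sub continuousOn_const ?_
  exact (Real.continuousOn_log.mono (fun u hu => ne_of_gt hu)).div_const l

lemma aux_G_bound (A : E →L[ℝ] E) (C w : ℝ)
    (hbound : ∀ t : ℝ, 0 ≤ t → ‖exp (t • A)‖ ≤ C * Real.exp (w * t))
    (f : E) {t l : ℝ} (hl0 : 0 < l) {u : ℝ} (hu : u ∈ Ioo (0:ℝ) (Real.exp (l * t))) :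
    ‖exp ((t - Real.log u / l) • A) f‖
      ≤ (C * Real.exp (w * t) * ‖f‖) * u ^ (-(w / l)) := by
  obtain ⟨hu0, hu1⟩ := hu
  have hs0 : 0 ≤ t - Real.log u / l := by
    have hlog : Real.log u < l * t := by
      have := Real.log_lt_log hu0 hu1
      rwa [Real.log_exp] at this
    have : Real.log u / l < t := by rw [div_lt_iff₀ hl0]; linarith
    linarith
  have h1 := aux_norm_T A C w hbound f hs0
  refine h1.trans (le_of_eq ?_)
  have : Real.exp (w * (t - Real.log u / l))
      = Real.exp (w * t) * u ^ (-(w / l)) := by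
    rw [Real.rpow_def_of_pos hu0, ← Real.exp_add]
    congr 1
    field_simp
    ring
  rw [this]; ring

lemma aux_G_integrable (A : E →L[ℝ] E) (C w : ℝ) (hw : 0 ≤ w)
    (hbound : ∀ t : ℝ, 0 ≤ t → ‖exp (t • A)‖ ≤ C * Real.exp (w * t))
    (f : E) {t l : ℝ} (hl : w < l) :
    IntegrableOn (fun u : ℝ => exp ((t - Real.log u / l) • A) f)
      (Ioo (0:ℝ) (Real.exp (l * t))) := by
  have hl0 : 0 < l := lt_of_le_of_lt hw hl
  have hrint : IntegrableOn (fun u : ℝ => (C * Real.exp (w * t) * ‖f‖) * u ^ (-(w / l)))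
      (Ioo (0:ℝ) (Real.exp (l * t))) := by
    refine Integrable.const_mul ?_ _
    have h1 : IntervalIntegrable (fun u : ℝ => u ^ (-(w / l))) volume 0 (Real.exp (l * t)) := by
      apply intervalIntegral.intervalIntegrable_rpow'
      have : w / l < 1 := by rwa [div_lt_one hl0]
      linarith
    exact (intervalIntegrable_iff_integrableOn_Ioo_of_le (Real.exp_pos _).le).mp h1
  refine hrint.mono' ?_ ?_
  · exact ((aux_G_contOn A f t l).mono Ioo_subset_Ioi_self).aestronglyMeasurable measurableSet_Ioo
  · filter_upwards [ae_restrict_mem measurableSet_Ioo] with u hu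
    exact aux_G_bound A C w hbound f hl0 hu

lemma aux_series (A : E →L[ℝ] E) (C w : ℝ) (hC : 1 ≤ C) (hw : 0 ≤ w)
    (hbound : ∀ t : ℝ, 0 ≤ t → ‖exp (t • A)‖ ≤ C * Real.exp (w * t))
    (R : ℝ → E →L[ℝ] E)
    (hR : ∀ μ : ℝ, w < μ →
      (μ • (1 : E →L[ℝ] E) - A) * R μ = 1 ∧ R μ * (μ • (1 : E →L[ℝ] E) - A) = 1)
    {l : ℝ} (hl : w < l) (t : ℝ) (f : E) :
    l • ∑' n : ℕ, ((-1 : ℝ)) ^ n •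
        (Real.exp (((n : ℝ) + 1) * l * t) / (Nat.factorial n : ℝ)) •
          R (((n : ℝ) + 1) * l) f
      = ∫ u in Ioo (0:ℝ) (Real.exp (l * t)),
          Real.exp (-u) • exp ((t - Real.log u / l) • A) f := by
  have hl0 : 0 < l := lt_of_le_of_lt hw hl
  set X : ℝ := Real.exp (l * t) with hX
  set G : ℝ → E := fun u => exp ((t - Real.log u / l) • A) f with hG
  set F : ℕ → ℝ → E := fun n u => ((-u) ^ n / (Nat.factorial n : ℝ)) • G u with hF
  have hGint : IntegrableOn G (Ioo 0 X) := aux_G_integrable A C w hw hbound f hl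
  have hGmeas : AEStronglyMeasurable G (volume.restrict (Ioo 0 X)) :=
    ((aux_G_contOn A f t l).mono Ioo_subset_Ioi_self).aestronglyMeasurable measurableSet_Ioo
  have hX0 : 0 < X := Real.exp_pos _
  -- integrability of each F n
  have hFint : ∀ n : ℕ, IntegrableOn (F n) (Ioo 0 X) := by
    intro n
    have hmeas : AEStronglyMeasurable (F n) (volume.restrict (Ioo 0 X)) := by
      refine AEStronglyMeasurable.smul ?_ hGmeas
      exact (Continuous.aestronglyMeasurable (by continuity))
    refine ((hGint.norm.const_mul (X ^ n / (Nat.factorial n : ℝ))).mono' hmeas ?_)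
    filter_upwards [ae_restrict_mem measurableSet_Ioo] with u hu
    rw [hF]
    simp only [norm_smul, Real.norm_eq_abs, norm_norm]
    rw [abs_div, abs_pow, abs_neg, abs_of_pos hu.1,
      abs_of_pos (by positivity : (0:ℝ) < (Nat.factorial n : ℝ))]
    have h2 : u ^ n ≤ X ^ n := pow_le_pow_left₀ hu.1.le hu.2.le n
    gcongr
  -- summability of the integrals of norms
  have hFsum : Summable fun n : ℕ => ∫ u in Ioo (0:ℝ) X, ‖F n u‖ := by
    refine Summable.of_nonneg_of_le
      (fun n => integral_nonneg fun u => norm_nonneg _)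
      (fun n => ?_)
      ((Real.summable_pow_div_factorial X).mul_right (∫ u in Ioo (0:ℝ) X, ‖G u‖))
    rw [← integral_const_mul]
    refine setIntegral_mono_on ((hFint n).norm) ((hGint.norm.const_mul _))
      measurableSet_Ioo ?_
    intro u hu
    rw [hF]
    simp only [norm_smul, Real.norm_eq_abs]
    rw [abs_div, abs_pow, abs_neg, abs_of_pos hu.1,
      abs_of_pos (by positivity : (0:ℝ) < (Nat.factorial n : ℝ))]
    have h2 : u ^ n ≤ X ^ n := pow_le_pow_left₀ hu.1.le hu.2.le n
    gcongr
  -- swap sum and integral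
  have hswap := integral_tsum_of_summable_integral_norm (μ := volume.restrict (Ioo (0:ℝ) X))
    hFint hFsum
  -- compute the pointwise sum
  have hptwise : ∀ u : ℝ, (∑' n : ℕ, F n u) = Real.exp (-u) • G u := by
    intro u
    rw [hF]
    simp only
    rw [(Real.summable_pow_div_factorial (-u)).tsum_smul_const]
    congr 1
    rw [Real.exp_eq_exp_ℝ, exp_eq_tsum_div]
  -- identify each term integral via the substitution lemma
  have hterm : ∀ n : ℕ, (∫ u in Ioo (0:ℝ) X, F n u)
      = l • ((-1 : ℝ)) ^ n • (Real.exp (((n : ℝ) + 1) * l * t) / (Nat.factorial n : ℝ)) •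
          R (((n : ℝ) + 1) * l) f := by
    intro n
    have hsub := aux_subst A C w hC hw hbound R hR hl t n f
    have heq : ∀ u ∈ Ioo (0:ℝ) X, F n u
        = (((-1 : ℝ)) ^ n / (Nat.factorial n : ℝ)) • ((u ^ n) • G u) := by
      intro u _
      rw [hF]
      simp only [smul_smul]
      congr 1
      rw [neg_pow]
      ring
    rw [setIntegral_congr_fun measurableSet_Ioo heq, integral_smul, hsub]
    rw [smul_smul, smul_smul, smul_smul]
    congr 1
    field_simp
  have hHasSum := hasSum_integral_of_summable_integral_norm
    (μ := volume.restrict (Ioo (0:ℝ) X)) hFint hFsum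
  rw [funext hterm] at hHasSum
  have hs2 : HasSum (fun n : ℕ => ((-1 : ℝ)) ^ n •
      (Real.exp (((n : ℝ) + 1) * l * t) / (Nat.factorial n : ℝ)) •
        R (((n : ℝ) + 1) * l) f)
      (l⁻¹ • ∫ u in Ioo (0:ℝ) X, (∑' n : ℕ, F n u)) := by
    have := hHasSum.const_smul l⁻¹
    simpa [smul_smul, ← mul_assoc, inv_mul_cancel₀ (ne_of_gt hl0), one_mul, one_smul] using this
  rw [hs2.tsum_eq, smul_smul, mul_inv_cancel₀ (ne_of_gt hl0), one_smul]
  refine setIntegral_congr_fun measurableSet_Ioo fun u _ => ?_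
  rw [hptwise u]

end Helpers

/-- Convergence of the Phragmén approximants to the semigroup: for `t > 0` and `f ∈ E`,
`λ ∑_{n≥1} (-1)^(n-1) (e^(nλt)/(n-1)!) R(nλ) f → exp (t • A) f` as `λ → ∞`. -/
theorem stmt_4 {E : Type*} [NormedAddCommGroup E] [NormedSpace ℝ E] [CompleteSpace E]
    (A : E →L[ℝ] E) (C w : ℝ) (hC : 1 ≤ C) (hw : 0 ≤ w)
    (hbound : ∀ t : ℝ, 0 ≤ t → ‖exp (t • A)‖ ≤ C * Real.exp (w * t))
    (R : ℝ → E →L[ℝ] E)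
    (hR : ∀ μ : ℝ, w < μ →
      (μ • (1 : E →L[ℝ] E) - A) * R μ = 1 ∧ R μ * (μ • (1 : E →L[ℝ] E) - A) = 1)
    (t : ℝ) (ht : 0 < t) (f : E) :
    Tendsto (fun l : ℝ => l • ∑' n : ℕ, ((-1 : ℝ)) ^ n •
        (Real.exp (((n : ℝ) + 1) * l * t) / (Nat.factorial n : ℝ)) •
          R (((n : ℝ) + 1) * l) f)
      atTop (nhds ((exp (t • A)) f)) := by
  set T : E := exp (t • A) f with hT
  set F : ℝ → ℝ → E := fun l u =>
    (Ioo (0:ℝ) (Real.exp (l * t))).indicator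
      (fun u => Real.exp (-u) • exp ((t - Real.log u / l) • A) f) u with hFdef
  set I : ℝ → E := fun l => ∫ u in Ioi (0:ℝ), F l u with hI
  -- the approximants eventually agree with I
  have heq : I =ᶠ[atTop] fun l : ℝ => l • ∑' n : ℕ, ((-1 : ℝ)) ^ n •
      (Real.exp (((n : ℝ) + 1) * l * t) / (Nat.factorial n : ℝ)) •
        R (((n : ℝ) + 1) * l) f := by
    filter_upwards [eventually_gt_atTop w] with l hl
    rw [aux_series A C w hC hw hbound R hR hl t f]
    rw [hI]
    simp only
    rw [hFdef]
    simp only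
    rw [setIntegral_indicator measurableSet_Ioo]
    congr 1
    rw [Set.inter_eq_self_of_subset_right Ioo_subset_Ioi_self]
  refine Tendsto.congr' heq ?_
  -- limit value
  have hlimval : (∫ u in Ioi (0:ℝ), Real.exp (-u) • T) = T := by
    rw [integral_smul_const, integral_exp_neg_Ioi_zero, one_smul]
  rw [hI, ← hlimval]
  -- dominated convergence
  set K : ℝ := C * Real.exp (w * t) * ‖f‖ with hK
  refine tendsto_integral_filter_of_dominated_convergence
    (fun u => K * (Real.exp (-u) * u ^ (-(1/2 : ℝ)) + Real.exp (-u))) ?_ ?_ ?_ ?_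
  · -- measurability
    refine Eventually.of_forall fun l => ?_
    refine AEStronglyMeasurable.indicator ?_ measurableSet_Ioo
    refine ContinuousOn.aestronglyMeasurable ?_ measurableSet_Ioi
    exact ((Real.continuous_exp.comp continuous_neg).continuousOn).smul (aux_G_contOn A f t l)
  · -- uniform bound
    filter_upwards [eventually_ge_atTop (max (2 * w) (w + 1))] with l hl
    have hl1 : w + 1 ≤ l := le_trans (le_max_right _ _) hl
    have hl2 : 2 * w ≤ l := le_trans (le_max_left _ _) hl
    have hl0 : 0 < l := by linarith
    have hwl : w / l ≤ 1 / 2 := by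
      rw [div_le_div_iff₀ hl0 (by norm_num : (0:ℝ) < 2)]
      linarith
    filter_upwards [ae_restrict_mem measurableSet_Ioi] with u hu0
    have hu0' : (0:ℝ) < u := hu0
    by_cases hmem : u ∈ Ioo (0:ℝ) (Real.exp (l * t))
    · rw [hFdef]
      simp only [indicator_of_mem hmem]
      rw [norm_smul, Real.norm_eq_abs, abs_of_pos (Real.exp_pos _)]
      have hG := aux_G_bound A C w hbound f hl0 hmem
      have hpow : u ^ (-(w / l)) ≤ u ^ (-(1/2 : ℝ)) + 1 := by
        rcases le_or_gt u 1 with hu1 | hu1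
        · have : u ^ (-(w / l)) ≤ u ^ (-(1/2 : ℝ)) :=
            Real.rpow_le_rpow_of_exponent_ge hu0' hu1 (by linarith)
          linarith
        · have h1 : u ^ (-(w / l)) ≤ 1 :=
            Real.rpow_le_one_of_one_le_of_nonpos hu1.le
              (neg_nonpos.mpr (div_nonneg hw hl0.le))
          have h2 : (0:ℝ) ≤ u ^ (-(1/2 : ℝ)) := Real.rpow_nonneg hu0'.le _
          linarith
      rw [← hK] at hG
      have hK0 : 0 ≤ K := by rw [hK]; positivity
      have he0 : (0:ℝ) ≤ Real.exp (-u) := (Real.exp_pos _).le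
      nlinarith [mul_le_mul_of_nonneg_left hG he0,
        mul_le_mul_of_nonneg_left hpow (mul_nonneg hK0 he0)]
    · rw [hFdef]
      simp only [indicator_of_notMem hmem]
      rw [norm_zero]
      positivity
  · -- integrability of the bound
    refine Integrable.const_mul ?_ _
    refine Integrable.add ?_ ?_
    · have h := Real.GammaIntegral_convergent (by norm_num : (0:ℝ) < 1/2)
      refine h.congr_fun (fun u hu => ?_) measurableSet_Ioi
      norm_num
    · have h := exp_neg_integrableOn_Ioi 0 zero_lt_one
      simp only [neg_mul, one_mul] at h
      exact h
  · -- pointwise limit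
    filter_upwards [ae_restrict_mem measurableSet_Ioi] with u hu0
    have hu0' : (0:ℝ) < u := hu0
    have hev : (fun l : ℝ => F l u) =ᶠ[atTop]
        fun l : ℝ => Real.exp (-u) • exp ((t - Real.log u / l) • A) f := by
      filter_upwards [eventually_gt_atTop (Real.log u / t)] with l hl
      have hmem : u ∈ Ioo (0:ℝ) (Real.exp (l * t)) := by
        refine ⟨hu0', ?_⟩
        rw [← Real.exp_log hu0']
        apply Real.exp_lt_exp.mpr
        rw [div_lt_iff₀ ht] at hl
        linarith [hl]
      rw [hFdef]; simp only [indicator_of_mem hmem]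
    refine Tendsto.congr' hev.symm ?_
    refine Tendsto.const_smul ?_ _
    have harg : Tendsto (fun l : ℝ => t - Real.log u / l) atTop (nhds t) := by
      have : Tendsto (fun l : ℝ => Real.log u / l) atTop (nhds 0) :=
        Tendsto.div_atTop tendsto_const_nhds tendsto_id
      simpa using tendsto_const_nhds.sub this
    exact ((aux_exp_cont A f).continuousAt.tendsto).comp harg
end

section
/- Let Q : ℝ → Matrix (Fin m) (Fin m) ℝ be continuous and pairwise commuting, i.e. Q(s)·Q(u) = Q(u)·Q(s) for all s, u. Define P(t) := exp( ∫₀ᵗ Q(s) ds ). Then P(0) = I (the m×m identity matrix) and for every t, the function P has derivative P'(t) = P(t) · Q(t); that is, P solves the Kolmogorov forward equation ∂_t P(t) = P(t) Q(t), P(0) = I. -/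
open MeasureTheory

section LinftyHelper

attribute [local instance] Matrix.linftyOpNormedRing Matrix.linftyOpNormedAlgebra

/-- Identity continuous linear map from the pi-normed function space to linfty-normed matrices. -/
noncomputable def piToMat {m : ℕ} :
    (Fin m → Fin m → ℝ) →L[ℝ] Matrix (Fin m) (Fin m) ℝ :=
  LinearMap.toContinuousLinearMap
    { toFun := fun x => (x : Matrix (Fin m) (Fin m) ℝ)
      map_add' := fun _ _ => rfl
      map_smul' := fun _ _ => rfl }

/-- Entry evaluation as a continuous linear map (linfty norm on matrices). -/
noncomputable def entryCLM' {m : ℕ} (i j : Fin m) :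
    Matrix (Fin m) (Fin m) ℝ →L[ℝ] ℝ :=
  LinearMap.toContinuousLinearMap
    { toFun := fun M => M i j
      map_add' := fun _ _ => rfl
      map_smul' := fun _ _ => rfl }

set_option maxHeartbeats 1000000 in
theorem exp_entry_hasDerivAt {m : ℕ} (f : ℝ → Matrix (Fin m) (Fin m) ℝ)
    (d : Matrix (Fin m) (Fin m) ℝ) (t : ℝ)
    (hfe : ∀ i j, HasDerivAt (fun τ => f τ i j) (d i j) t)
    (h0 : f t = 0) (i j : Fin m) :
    HasDerivAt (fun τ => (NormedSpace.exp (f τ)) i j) (d i j) t := by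
  have hpi : @HasDerivAt ℝ _ (Fin m → Fin m → ℝ) _ _ _ _ f d t :=
    hasDerivAt_pi.2 fun i => hasDerivAt_pi.2 fun j => hfe i j
  have h2 : HasDerivAt f (piToMat d) t :=
    (piToMat.hasFDerivAt).comp_hasDerivAt t hpi
  have h3 : HasFDerivAt (NormedSpace.exp)
      (1 : Matrix (Fin m) (Fin m) ℝ →L[ℝ] Matrix (Fin m) (Fin m) ℝ) (f t) := by
    rw [h0]; exact hasFDerivAt_exp_zero
  have h4 : HasDerivAt (fun τ => NormedSpace.exp (f τ))
      (piToMat d) t := by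
    exact h3.comp_hasDerivAt t h2
  exact (entryCLM' i j).hasFDerivAt.comp_hasDerivAt t h4

end LinftyHelper

attribute [local instance] Matrix.normedAddCommGroup Matrix.normedSpace

/-- Kolmogorov forward equation in the commuting case: if `Q : ℝ → Matrix (Fin m) (Fin m) ℝ`
is continuous and pairwise commuting, then `P(t) := exp (∫₀ᵗ Q(s) ds)` satisfies `P(0) = I`
and `P'(t) = P(t) Q(t)` for every `t`. -/
theorem stmt_10 {m : ℕ} (Q : ℝ → Matrix (Fin m) (Fin m) ℝ)
    (hcont : Continuous Q) (hcomm : ∀ s u, Q s * Q u = Q u * Q s) :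
    NormedSpace.exp (∫ s in (0 : ℝ)..(0 : ℝ), Q s) = (1 : Matrix (Fin m) (Fin m) ℝ) ∧
    ∀ t : ℝ,
      HasDerivAt (fun τ : ℝ => NormedSpace.exp (∫ s in (0 : ℝ)..τ, Q s))
        (NormedSpace.exp (∫ s in (0 : ℝ)..t, Q s) * Q t) t := by
  have hint := fun a b : ℝ =>
    hcont.intervalIntegrable (μ := volume) a b
  constructor
  · rw [intervalIntegral.integral_same, NormedSpace.exp_zero]
  intro t
  -- integral commutes with right/left multiplication
  have key : ∀ (M : Matrix (Fin m) (Fin m) ℝ) (a b : ℝ),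
      (∫ s in a..b, Q s) * M = ∫ s in a..b, Q s * M := by
    intro M a b
    exact ((LinearMap.toContinuousLinearMap
      (LinearMap.mulRight ℝ M)).intervalIntegral_comp_comm (hint a b)).symm
  have key' : ∀ (M : Matrix (Fin m) (Fin m) ℝ) (a b : ℝ),
      M * (∫ s in a..b, Q s) = ∫ s in a..b, M * Q s := by
    intro M a b
    exact ((LinearMap.toContinuousLinearMap
      (LinearMap.mulLeft ℝ M)).intervalIntegral_comp_comm (hint a b)).symm
  -- each Q u commutes with each integral
  have hQA : ∀ (u a b : ℝ), Q u * (∫ s in a..b, Q s) = (∫ s in a..b, Q s) * Q u := by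
    intro u a b
    rw [key, key']
    congr 1
    funext s
    exact (hcomm s u).symm
  -- two integrals commute
  have hAA : ∀ (a b c d : ℝ),
      Commute (∫ s in a..b, Q s) (∫ s in c..d, Q s) := by
    intro a b c d
    unfold Commute SemiconjBy
    rw [key, key']
    congr 1
    funext s
    exact hQA s c d
  -- split the integral
  have hsplit : ∀ τ : ℝ, (∫ s in (0:ℝ)..τ, Q s)
      = (∫ s in (0:ℝ)..t, Q s) + ∫ s in t..τ, Q s := fun τ =>
    (intervalIntegral.integral_add_adjacent_intervals (hint 0 t) (hint t τ)).symm
  have hfun : (fun τ : ℝ => NormedSpace.exp (∫ s in (0:ℝ)..τ, Q s))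
      = fun τ : ℝ => NormedSpace.exp (∫ s in (0:ℝ)..t, Q s) *
          NormedSpace.exp (∫ s in t..τ, Q s) := by
    funext τ
    rw [hsplit τ]
    exact Matrix.exp_add_of_commute _ _ (hAA 0 t t τ)
  rw [hfun]
  -- derivative of the inner integral
  have hC : HasDerivAt (fun τ : ℝ => ∫ s in t..τ, Q s) (Q t) t :=
    intervalIntegral.integral_hasDerivAt_right (hint t t)
      ((Continuous.stronglyMeasurable (by exact hcont)).stronglyMeasurableAtFilter) hcont.continuousAt
  have hCe : ∀ i j, HasDerivAt (fun τ : ℝ => (∫ s in t..τ, Q s) i j) (Q t i j) t := by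
    intro i j
    exact ((LinearMap.toContinuousLinearMap
      ({ toFun := fun M : Matrix (Fin m) (Fin m) ℝ => M i j
         map_add' := fun _ _ => rfl
         map_smul' := fun _ _ => rfl } :
        Matrix (Fin m) (Fin m) ℝ →ₗ[ℝ] ℝ)).hasFDerivAt.comp_hasDerivAt t hC)
  have hEe : ∀ i j, HasDerivAt
      (fun τ : ℝ => (NormedSpace.exp (∫ s in t..τ, Q s)) i j) (Q t i j) t :=
    exp_entry_hasDerivAt _ _ t hCe (intervalIntegral.integral_same)
  -- assemble entrywise
  apply hasDerivAt_pi.2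
  intro i
  apply hasDerivAt_pi.2
  intro j
  simp only [Matrix.mul_apply]
  exact HasDerivAt.fun_sum fun k _ =>
    (hEe k j).const_mul (NormedSpace.exp (∫ s in (0:ℝ)..t, Q s) i k)
end

section
/- Let A : ℝ → Matrix (Fin m) (Fin m) ℝ be differentiable at θ₀ with derivative A'(θ₀), and let t > 0. Then the map θ ↦ exp( t·A(θ) ) is differentiable at θ₀ and its derivative equals the Bochner integral ∫₀ᵗ exp( (t−s)·A(θ₀) ) · A'(θ₀) · exp( s·A(θ₀) ) ds. -/
section DuhamelGeneric

open NormedSpace Filter MeasureTheory intervalIntegral Set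

variable {𝔸 : Type*} [NormedRing 𝔸] [NormedAlgebra ℝ 𝔸] [CompleteSpace 𝔸]

private lemma duhamel_commute (C : 𝔸) (u : ℝ) : C * exp (u • C) = exp (u • C) * C :=
  (((Commute.refl C).smul_right u).exp_right).eq

private lemma duhamel_cont1 (C : 𝔸) (t : ℝ) : Continuous fun s : ℝ => exp ((t - s) • C) :=
  (continuous_iff_continuousAt.2 fun x => (exp_analytic (𝕂 := ℝ) x).continuousAt).comp ((continuous_const.sub continuous_id).smul continuous_const)

private lemma duhamel_cont2 (B : 𝔸) : Continuous fun s : ℝ => exp (s • B) :=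
  (continuous_iff_continuousAt.2 fun x => (exp_analytic (𝕂 := ℝ) x).continuousAt).comp (continuous_id.smul continuous_const)

private lemma duhamel_cont3 (C V B : 𝔸) (t : ℝ) :
    Continuous fun s : ℝ => exp ((t - s) • C) * V * exp (s • B) :=
  ((duhamel_cont1 C t).mul continuous_const).mul (duhamel_cont2 B)

private lemma duhamel_hasDerivAt (B C : 𝔸) (t s : ℝ) :
    HasDerivAt (fun u : ℝ => exp ((t - u) • C) * exp (u • B))
      (exp ((t - s) • C) * (B - C) * exp (s • B)) s := by
  have h1 : HasDerivAt (fun u : ℝ => exp ((t - u) • C))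
      ((-1 : ℝ) • (C * exp ((t - s) • C))) s :=
    (hasDerivAt_exp_smul_const' C (t - s)).scomp s ((hasDerivAt_id s).const_sub t)
  have h2 : HasDerivAt (fun u : ℝ => exp (u • B)) (exp (s • B) * B) s :=
    hasDerivAt_exp_smul_const B s
  have h3 := h1.mul h2
  convert h3 using 1
  · rfl
  rw [neg_one_smul, duhamel_commute C (t - s), ← duhamel_commute B s]
  noncomm_ring

private lemma duhamel_exp_sub_exp (B C : 𝔸) (t : ℝ) :
    exp (t • B) - exp (t • C) =
      ∫ s in (0:ℝ)..t, exp ((t - s) • C) * (B - C) * exp (s • B) := by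
  rw [intervalIntegral.integral_eq_sub_of_hasDerivAt (fun s _ => duhamel_hasDerivAt B C t s)
    ((duhamel_cont3 C (B - C) B t).intervalIntegrable 0 t)]
  simp

private lemma duhamel_norm_exp_le (x : 𝔸) :
    ‖exp x‖ ≤ max 1 ‖(1 : 𝔸)‖ * Real.exp ‖x‖ := by
  have hsum := NormedSpace.norm_expSeries_summable' (𝕂 := ℝ) x
  rw [exp_eq_tsum (𝕂 := ℝ)]
  refine (norm_tsum_le_tsum_norm hsum).trans ?_
  have hs2 : Summable fun n : ℕ => max 1 ‖(1 : 𝔸)‖ * (‖x‖ ^ n / n.factorial) :=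
    (Real.summable_pow_div_factorial ‖x‖).mul_left _
  have hterm : ∀ n : ℕ, ‖((n.factorial)⁻¹ : ℝ) • x ^ n‖ ≤ max 1 ‖(1 : 𝔸)‖ * (‖x‖ ^ n / n.factorial) := by
    intro n
    match n with
    | 0 => simpa using le_max_right 1 ‖(1 : 𝔸)‖
    | (n + 1) =>
      rw [norm_smul, Real.norm_eq_abs, abs_of_nonneg (by positivity)]
      have h1 : ‖x ^ (n + 1)‖ ≤ ‖x‖ ^ (n + 1) := norm_pow_le' x n.succ_pos
      have h2 : (1 : ℝ) ≤ max 1 ‖(1 : 𝔸)‖ := le_max_left _ _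
      have h3 : (0:ℝ) < ((n+1).factorial : ℝ) := by positivity
      calc (((n+1).factorial : ℝ))⁻¹ * ‖x ^ (n+1)‖ ≤ (((n+1).factorial : ℝ))⁻¹ * ‖x‖ ^ (n+1) := by gcongr
        _ = ‖x‖ ^ (n+1) / (n+1).factorial := by ring
        _ ≤ max 1 ‖(1 : 𝔸)‖ * (‖x‖ ^ (n+1) / (n+1).factorial) := by
            nth_rewrite 1 [← one_mul (‖x‖ ^ (n+1) / ((n+1).factorial : ℝ))]
            gcongr
  refine (Summable.tsum_le_tsum hterm hsum hs2).trans_eq ?_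
  rw [tsum_mul_left]
  congr 1
  rw [Real.exp_eq_exp_ℝ, exp_eq_tsum_div]

private theorem duhamel_generic (A : ℝ → 𝔸) (A' : 𝔸) (θ₀ : ℝ) (hA : HasDerivAt A A' θ₀)
    (t : ℝ) (ht : 0 < t) :
    HasDerivAt (fun θ : ℝ => exp (t • A θ))
      (∫ s in (0:ℝ)..t, exp ((t - s) • A θ₀) * A' * exp (s • A θ₀)) θ₀ := by
  rw [hasDerivAt_iff_tendsto_slope]
  set C := A θ₀ with hCdef
  set K := max 1 ‖(1 : 𝔸)‖ with hKdef
  have hK0 : (0:ℝ) < K := lt_of_lt_of_le one_pos (le_max_left _ _)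
  set R := ‖C‖ + 1 with hRdef
  have hR0 : (0:ℝ) ≤ R := by positivity
  have hCR : ‖C‖ ≤ R := by rw [hRdef]; linarith
  set M := K * Real.exp (t * R) with hMdef
  have hM0 : (0:ℝ) < M := mul_pos hK0 (Real.exp_pos _)
  have expb : ∀ (X : 𝔸), ‖X‖ ≤ R → ∀ u : ℝ, |u| ≤ t → ‖exp (u • X)‖ ≤ M := by
    intro X hX u hu
    refine (duhamel_norm_exp_le _).trans ?_
    rw [hMdef]
    have : ‖u • X‖ ≤ t * R := by
      rw [norm_smul, Real.norm_eq_abs]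
      exact mul_le_mul hu hX (norm_nonneg _) ht.le
    gcongr
  have hdiffexp : ∀ (B : 𝔸), ‖B‖ ≤ R → ∀ s ∈ Set.Ioc (0:ℝ) t,
      ‖exp (s • B) - exp (s • C)‖ ≤ t * (M * M * ‖B - C‖) := by
    intro B hB s hs
    rw [duhamel_exp_sub_exp B C s]
    have hpt : ∀ u ∈ Set.uIoc (0:ℝ) s,
        ‖exp ((s - u) • C) * (B - C) * exp (u • B)‖ ≤ M * ‖B - C‖ * M := by
      intro u hu
      rw [Set.uIoc_of_le hs.1.le] at hu
      have h1 : ‖exp ((s - u) • C)‖ ≤ M := by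
        refine expb C hCR _ ?_
        rw [abs_of_nonneg (by linarith [hu.2])]
        linarith [hu.1, hs.2]
      have h2 : ‖exp (u • B)‖ ≤ M := by
        refine expb B hB _ ?_
        rw [abs_of_pos hu.1]
        linarith [hu.2, hs.2]
      calc ‖exp ((s - u) • C) * (B - C) * exp (u • B)‖
          ≤ ‖exp ((s - u) • C) * (B - C)‖ * ‖exp (u • B)‖ := norm_mul_le _ _
        _ ≤ (‖exp ((s - u) • C)‖ * ‖B - C‖) * ‖exp (u • B)‖ :=
            mul_le_mul_of_nonneg_right (norm_mul_le _ _) (norm_nonneg _)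
        _ ≤ (M * ‖B - C‖) * M := by gcongr
        _ = M * ‖B - C‖ * M := rfl
    refine (intervalIntegral.norm_integral_le_of_norm_le_const hpt).trans ?_
    rw [sub_zero, abs_of_pos hs.1]
    nlinarith [mul_nonneg (mul_nonneg hM0.le hM0.le) (norm_nonneg (B - C)),
      mul_nonneg (mul_nonneg (mul_nonneg hM0.le (norm_nonneg (B - C))) hM0.le)
        (sub_nonneg.mpr hs.2), hs.1, hs.2]
  have hVA : Tendsto (fun θ => slope A θ₀ θ) (nhdsWithin θ₀ {θ₀}ᶜ) (nhds A') :=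
    hasDerivAt_iff_tendsto_slope.mp hA
  have hAcont : Tendsto (fun θ => A θ) (nhdsWithin θ₀ {θ₀}ᶜ) (nhds C) :=
    hA.continuousAt.tendsto.mono_left nhdsWithin_le_nhds
  have hball : ∀ᶠ θ in nhdsWithin θ₀ {θ₀}ᶜ, ‖A θ - C‖ ≤ 1 := by
    filter_upwards [hAcont (Metric.closedBall_mem_nhds C one_pos)] with θ hθ
    simpa [Metric.mem_closedBall, dist_eq_norm] using hθ
  have hslope : ∀ θ, θ ≠ θ₀ →
      slope (fun θ => exp (t • A θ)) θ₀ θ =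
        ∫ s in (0:ℝ)..t, exp ((t - s) • C) * slope A θ₀ θ * exp (s • A θ) := by
    intro θ hθ
    rw [slope_def_module, duhamel_exp_sub_exp (A θ) C t, ← intervalIntegral.integral_smul]
    congr 1
    funext s
    rw [slope_def_module, mul_smul_comm, smul_mul_assoc]
  rw [← tendsto_sub_nhds_zero_iff]
  have hbound : ∀ᶠ θ in nhdsWithin θ₀ {θ₀}ᶜ,
      ‖slope (fun θ => exp (t • A θ)) θ₀ θ -
        (∫ s in (0:ℝ)..t, exp ((t - s) • C) * A' * exp (s • C))‖ ≤
      (M * ‖slope A θ₀ θ - A'‖ * M + M * ‖A'‖ * (t * (M * M * ‖A θ - C‖))) * t := by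
    filter_upwards [hball, self_mem_nhdsWithin] with θ hθ1 hθ2
    have hθR : ‖A θ‖ ≤ R := by
      have h := norm_add_le (A θ - C) C
      rw [sub_add_cancel] at h
      rw [hRdef]; linarith
    rw [hslope θ hθ2, ← intervalIntegral.integral_sub
      ((duhamel_cont3 C (slope A θ₀ θ) (A θ) t).intervalIntegrable 0 t)
      ((duhamel_cont3 C A' C t).intervalIntegrable 0 t)]
    refine (intervalIntegral.norm_integral_le_of_norm_le_const
      (C := M * ‖slope A θ₀ θ - A'‖ * M + M * ‖A'‖ * (t * (M * M * ‖A θ - C‖))) ?_).trans ?_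
    · intro s hs
      rw [Set.uIoc_of_le ht.le] at hs
      have key : exp ((t - s) • C) * slope A θ₀ θ * exp (s • A θ) -
          exp ((t - s) • C) * A' * exp (s • C) =
          exp ((t - s) • C) * (slope A θ₀ θ - A') * exp (s • A θ) +
          exp ((t - s) • C) * A' * (exp (s • A θ) - exp (s • C)) := by noncomm_ring
      rw [key]
      have hE1 : ‖exp ((t - s) • C)‖ ≤ M := by
        refine expb C hCR _ ?_
        rw [abs_of_nonneg (by linarith [hs.2])]
        linarith [hs.1]
      have hE2 : ‖exp (s • A θ)‖ ≤ M := by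
        refine expb (A θ) hθR _ ?_
        rw [abs_of_pos hs.1]
        exact hs.2
      have hd := hdiffexp (A θ) hθR s hs
      have b1 : ‖exp ((t - s) • C) * (slope A θ₀ θ - A') * exp (s • A θ)‖ ≤
          M * ‖slope A θ₀ θ - A'‖ * M := by
        calc ‖exp ((t - s) • C) * (slope A θ₀ θ - A') * exp (s • A θ)‖
            ≤ ‖exp ((t - s) • C) * (slope A θ₀ θ - A')‖ * ‖exp (s • A θ)‖ := norm_mul_le _ _
          _ ≤ (‖exp ((t - s) • C)‖ * ‖slope A θ₀ θ - A'‖) * ‖exp (s • A θ)‖ :=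
              mul_le_mul_of_nonneg_right (norm_mul_le _ _) (norm_nonneg _)
          _ ≤ (M * ‖slope A θ₀ θ - A'‖) * M := by gcongr
      have b2 : ‖exp ((t - s) • C) * A' * (exp (s • A θ) - exp (s • C))‖ ≤
          M * ‖A'‖ * (t * (M * M * ‖A θ - C‖)) := by
        calc ‖exp ((t - s) • C) * A' * (exp (s • A θ) - exp (s • C))‖
            ≤ ‖exp ((t - s) • C) * A'‖ * ‖exp (s • A θ) - exp (s • C)‖ := norm_mul_le _ _
          _ ≤ (‖exp ((t - s) • C)‖ * ‖A'‖) * ‖exp (s • A θ) - exp (s • C)‖ :=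
              mul_le_mul_of_nonneg_right (norm_mul_le _ _) (norm_nonneg _)
          _ ≤ (M * ‖A'‖) * (t * (M * M * ‖A θ - C‖)) := by gcongr
      exact (norm_add_le _ _).trans (add_le_add b1 b2)
    · rw [sub_zero, abs_of_pos ht]
  refine squeeze_zero_norm' hbound ?_
  have l1 : Tendsto (fun θ => ‖slope A θ₀ θ - A'‖) (nhdsWithin θ₀ {θ₀}ᶜ) (nhds 0) := by
    simpa using (hVA.sub_const A').norm
  have l2 : Tendsto (fun θ => ‖A θ - C‖) (nhdsWithin θ₀ {θ₀}ᶜ) (nhds 0) := by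
    simpa using (hAcont.sub_const C).norm
  have t1 : Tendsto (fun θ => M * ‖slope A θ₀ θ - A'‖ * M) (nhdsWithin θ₀ {θ₀}ᶜ)
      (nhds (M * 0 * M)) := (l1.const_mul M).mul_const M
  have t2 : Tendsto (fun θ => M * ‖A'‖ * (t * (M * M * ‖A θ - C‖))) (nhdsWithin θ₀ {θ₀}ᶜ)
      (nhds (M * ‖A'‖ * (t * (M * M * 0)))) := ((l2.const_mul (M * M)).const_mul t).const_mul _
  have := (t1.add t2).mul_const t
  simpa using this

end DuhamelGeneric

section MatrixLinfty

open NormedSpace Filter MeasureTheory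

attribute [local instance] Matrix.linftyOpNormedAddCommGroup Matrix.linftyOpNormedRing
  Matrix.linftyOpNormedAlgebra

private lemma matrix_integrand_cont {m : ℕ} (C A' : Matrix (Fin m) (Fin m) ℝ) (t : ℝ) :
    Continuous fun s : ℝ => exp ((t - s) • C) * A' * exp (s • C) :=
  ((exp_continuous.comp ((continuous_const.sub continuous_id).smul continuous_const)).mul
    continuous_const).mul (exp_continuous.comp (continuous_id.smul continuous_const))

private lemma matrix_integral_entry_lin {m : ℕ} (F : ℝ → Matrix (Fin m) (Fin m) ℝ) (a b : ℝ)
    (hF : Continuous F) (i j : Fin m) :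
    (∫ s in a..b, F s) i j = ∫ s in a..b, F s i j := by
  let L : Matrix (Fin m) (Fin m) ℝ →ₗ[ℝ] ℝ :=
    { toFun := fun M => M i j, map_add' := fun _ _ => rfl, map_smul' := fun _ _ => rfl }
  exact ((LinearMap.toContinuousLinearMap L).intervalIntegral_comp_comm
    (hF.intervalIntegrable a b)).symm

private theorem matrix_duhamel_key {m : ℕ} (A : ℝ → Matrix (Fin m) (Fin m) ℝ)
    (A' : Matrix (Fin m) (Fin m) ℝ) (θ₀ : ℝ)
    (hA : Tendsto (slope A θ₀) (nhdsWithin θ₀ {θ₀}ᶜ) (nhds A')) (t : ℝ) (ht : 0 < t) :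
    ∃ D : Matrix (Fin m) (Fin m) ℝ,
      (∀ i j, D i j = ∫ s in (0:ℝ)..t,
        (exp ((t - s) • A θ₀) * A' * exp (s • A θ₀)) i j) ∧
      Tendsto (slope (fun θ => exp (t • A θ)) θ₀) (nhdsWithin θ₀ {θ₀}ᶜ) (nhds D) := by
  have hA' : HasDerivAt A A' θ₀ := hasDerivAt_iff_tendsto_slope.mpr hA
  have h := duhamel_generic A A' θ₀ hA' t ht
  exact ⟨_, fun i j => matrix_integral_entry_lin _ 0 t (matrix_integrand_cont (A θ₀) A' t) i j,
    hasDerivAt_iff_tendsto_slope.mp h⟩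

end MatrixLinfty


attribute [local instance] Matrix.normedAddCommGroup Matrix.normedSpace

open MeasureTheory

private lemma matrix_integral_entry_pi {m : ℕ} (F : ℝ → Matrix (Fin m) (Fin m) ℝ) (a b : ℝ)
    (hF : Continuous F) (i j : Fin m) :
    (∫ s in a..b, F s) i j = ∫ s in a..b, F s i j := by
  let L : Matrix (Fin m) (Fin m) ℝ →ₗ[ℝ] ℝ :=
    { toFun := fun M => M i j, map_add' := fun _ _ => rfl, map_smul' := fun _ _ => rfl }
  exact ((LinearMap.toContinuousLinearMap L).intervalIntegral_comp_comm
    (hF.intervalIntegrable a b)).symm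

/-- Duhamel's formula for the parameter derivative of the matrix exponential: if
`A : ℝ → Matrix (Fin m) (Fin m) ℝ` is differentiable at `θ₀` with derivative `A'` and
`t > 0`, then `θ ↦ exp (t • A θ)` is differentiable at `θ₀` with derivative
`∫₀ᵗ exp ((t-s) • A θ₀) A' exp (s • A θ₀) ds`. -/
theorem stmt_12 {m : ℕ} (A : ℝ → Matrix (Fin m) (Fin m) ℝ)
    (A' : Matrix (Fin m) (Fin m) ℝ) (θ₀ : ℝ) (hA : HasDerivAt A A' θ₀)
    (t : ℝ) (ht : 0 < t) :
    HasDerivAt (fun θ : ℝ => NormedSpace.exp (t • A θ))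
      (∫ s in (0 : ℝ)..t,
        NormedSpace.exp ((t - s) • A θ₀) * A' * NormedSpace.exp (s • A θ₀)) θ₀ := by
  have hAs : Filter.Tendsto (slope A θ₀) (nhdsWithin θ₀ {θ₀}ᶜ) (nhds A') :=
    hasDerivAt_iff_tendsto_slope.mp hA
  obtain ⟨D, hD, hT⟩ := matrix_duhamel_key A A' θ₀ hAs t ht
  have hDeq : (∫ s in (0 : ℝ)..t,
      NormedSpace.exp ((t - s) • A θ₀) * A' * NormedSpace.exp (s • A θ₀)) = D := by
    ext i j
    rw [matrix_integral_entry_pi _ 0 t (matrix_integrand_cont (A θ₀) A' t) i j, hD i j]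
  apply hasDerivAt_iff_tendsto_slope.mpr
  rw [hDeq]
  exact hT
end
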